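/- For any two independent Poisson random variables c and c' with parameter λ, the expectation of the sum over k from 0 to min(c,c') of π_{λs}(k)·π_{λ(1-s)}(c−k)·π_{λ(1-s)}(c'−k)/(π_λ(c)·π_λ(c')) equals 1, where π_μ(k) = e^{−μ} μ^k / k!. -/

import Mathlib

/-- Poisson pmf with parameter `μ`. -/
noncomputable def poissonPMF (μ : ℝ) (k : ℕ) : ℝ :=
  Real.exp (-μ) * μ ^ k / (Nat.factorial k)

lemma hasSum_poissonPMF {μ : ℝ} (hμ : 0 ≤ μ) : HasSum (poissonPMF μ) 1 := by
  have h := ProbabilityTheory.poissonPMFRealSum μ.toNNReal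
  have : (fun n ↦ ProbabilityTheory.poissonPMFReal μ.toNNReal n) = poissonPMF μ := by
    ext n
    simp [ProbabilityTheory.poissonPMFReal, poissonPMF, Real.coe_toNNReal μ hμ]
  rw [← this]; exact h

lemma poissonPMF_pos {μ : ℝ} (hμ : 0 < μ) (n : ℕ) : 0 < poissonPMF μ n := by
  unfold poissonPMF
  positivity

lemma poissonPMF_nonneg {μ : ℝ} (hμ : 0 ≤ μ) (n : ℕ) : 0 ≤ poissonPMF μ n := by
  unfold poissonPMF
  positivity

/-- For independent Poisson(λ) variables c, c', the expectation of
`∑_{k=0}^{min(c,c')} π_{λs}(k) π_{λ(1-s)}(c-k) π_{λ(1-s)}(c'-k) / (π_λ(c) π_λ(c'))` equals 1. -/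
theorem stmt_0 (lam s : ℝ) (hlam : 0 < lam) (hs : s ∈ Set.Icc (0:ℝ) 1) :
    ∑' c : ℕ, ∑' c' : ℕ, poissonPMF lam c * poissonPMF lam c' *
      (∑ k ∈ Finset.range (min c c' + 1),
        poissonPMF (lam * s) k * poissonPMF (lam * (1 - s)) (c - k) *
          poissonPMF (lam * (1 - s)) (c' - k) / (poissonPMF lam c * poissonPMF lam c')) = 1 := by
  obtain ⟨hs0, hs1⟩ := hs
  have hμ1 : 0 ≤ lam * s := mul_nonneg hlam.le hs0
  have hμ2 : 0 ≤ lam * (1 - s) := mul_nonneg hlam.le (by linarith)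
  set a := poissonPMF (lam * s) with ha
  set b := poissonPMF (lam * (1 - s)) with hb
  have hsa : HasSum a 1 := hasSum_poissonPMF hμ1
  have hsb : HasSum b 1 := hasSum_poissonPMF hμ2
  -- Step 1: cancel the positive factor
  have hcancel : ∀ c c' : ℕ, poissonPMF lam c * poissonPMF lam c' *
      (∑ k ∈ Finset.range (min c c' + 1),
        a k * b (c - k) * b (c' - k) / (poissonPMF lam c * poissonPMF lam c')) =
      ∑ k ∈ Finset.range (min c c' + 1), a k * b (c - k) * b (c' - k) := by
    intro c c'
    have hP : poissonPMF lam c * poissonPMF lam c' ≠ 0 :=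
      (mul_pos (poissonPMF_pos hlam c) (poissonPMF_pos hlam c')).ne'
    rw [Finset.mul_sum]
    refine Finset.sum_congr rfl fun k _ ↦ ?_
    rw [mul_comm, div_mul_cancel₀ _ hP]
  simp only [hcancel]
  -- Step 2: inner tsum over c'
  have hinner : ∀ c : ℕ, ∑' c' : ℕ, ∑ k ∈ Finset.range (min c c' + 1),
      a k * b (c - k) * b (c' - k) = ∑ k ∈ Finset.range (c + 1), a k * b (c - k) := by
    intro c
    have hrewrite : ∀ c' : ℕ, ∑ k ∈ Finset.range (min c c' + 1),
        a k * b (c - k) * b (c' - k) =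
        ∑ k ∈ Finset.range (c + 1),
          (if k ≤ c' then a k * b (c - k) * b (c' - k) else 0) := by
      intro c'
      rw [← Finset.sum_filter]
      congr 1
      ext k
      simp only [Finset.mem_filter, Finset.mem_range, Nat.lt_succ_iff, le_min_iff]
    simp only [hrewrite]
    have hterm : ∀ k : ℕ, HasSum (fun c' : ℕ ↦
        (if k ≤ c' then a k * b (c - k) * b (c' - k) else 0)) (a k * b (c - k)) := by
      intro k
      have h1 : HasSum (fun j : ℕ ↦
          (if k ≤ j + k then a k * b (c - k) * b (j + k - k) else 0))
          (a k * b (c - k)) := by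
        simp only [Nat.le_add_left, if_true, Nat.add_sub_cancel]
        simpa using (hsb.mul_left (a k * b (c - k)))
      have h2 := (hasSum_nat_add_iff
        (f := fun c' : ℕ ↦ (if k ≤ c' then a k * b (c - k) * b (c' - k) else 0)) k).mp h1
      have h3 : ∑ i ∈ Finset.range k,
          (if k ≤ i then a k * b (c - k) * b (i - k) else 0) = 0 := by
        apply Finset.sum_eq_zero
        intro i hi
        rw [if_neg]
        exact Nat.not_le.mpr (Finset.mem_range.mp hi)
      rw [h3, add_zero] at h2
      exact h2
    rw [Summable.tsum_finsetSum (fun k _ ↦ (hterm k).summable)]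
    exact Finset.sum_congr rfl fun k _ ↦ (hterm k).tsum_eq
  simp only [hinner]
  -- Step 3: Cauchy product
  have habs_a : Summable fun n ↦ ‖a n‖ := by
    simpa [Real.norm_of_nonneg (poissonPMF_nonneg hμ1 _), summable_abs_iff] using hsa.summable
  have habs_b : Summable fun n ↦ ‖b n‖ := by
    simpa [Real.norm_of_nonneg (poissonPMF_nonneg hμ2 _), summable_abs_iff] using hsb.summable
  have := tsum_mul_tsum_eq_tsum_sum_range_of_summable_norm habs_a habs_b
  rw [hsa.tsum_eq, hsb.tsum_eq, one_mul] at this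
  rw [← this]
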